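/- For every γ > 0 and every integer N ≥ 2, P_sync(γ, N) ≤ √N · ( erf( γN/√2 ) )^{N−1}, where erf(x) = (2/√π) ∫_0^x e^{−t²} dt. -/

import Mathlib

open Real Matrix Finset MeasureTheory ProbabilityTheory

/-- The Kuramoto interaction vector field `f_i(θ) = Σ_j sin (θ_j - θ_i)`. -/
noncomputable def kuraF (N : ℕ) (θ : Fin N → ℝ) : Fin N → ℝ :=
  fun i => ∑ j, Real.sin (θ j - θ i)

/-- The Jacobian `J(θ)`: `J_ij = cos (θ_i - θ_j)` off the diagonal and
`J_ii = -Σ_{k ≠ i} cos (θ_k - θ_i)`. -/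
noncomputable def Jmat (N : ℕ) (θ : Fin N → ℝ) : Matrix (Fin N) (Fin N) ℝ :=
  Matrix.of fun i j =>
    if i = j then -∑ k ∈ Finset.univ \ {i}, Real.cos (θ k - θ i)
    else Real.cos (θ i - θ j)

/-- The set of frequency samples `ω` for which the (mean-adjusted) Kuramoto system with
coupling `γ` has a stable fully synchronized solution: some `θ` with
`ω_i - (1/N) Σ_j ω_j + γ f_i(θ) = 0` for all `i` and `J(θ)` negative semidefinite with
one-dimensional kernel. -/
def syncSet (N : ℕ) (γ : ℝ) : Set (Fin N → ℝ) :=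
  {ω | ∃ θ : Fin N → ℝ,
    (∀ i, ω i - (∑ j, ω j) / N + γ * kuraF N θ i = 0) ∧
    (-(Jmat N θ)).PosSemidef ∧
    Module.finrank ℝ (LinearMap.ker (Matrix.toLin' (Jmat N θ))) = 1}

/-- `P_sync(γ, N)`: the probability, for `ω` a vector of `N` i.i.d. standard Gaussian
random variables, that the Kuramoto system with coupling `γ` fully synchronizes. -/
noncomputable def Psync (γ : ℝ) (N : ℕ) : ℝ :=
  ((Measure.pi fun _ : Fin N => gaussianReal 0 1) (syncSet N γ)).toReal

/-- The error function `erf x = (2/√π) ∫_0^x e^{-t²} dt`. -/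
noncomputable def erf (x : ℝ) : ℝ :=
  (2 / Real.sqrt Real.pi) * ∫ t in (0 : ℝ)..x, Real.exp (-t ^ 2)

/-! ### Auxiliary lemmas -/

open scoped ENNReal NNReal

section ProdLintegral

variable {ι : Type*} [Fintype ι] [DecidableEq ι]

lemma KuraAux.lmarg_prod (f : ι → ℝ → ℝ≥0∞)
    (hf : ∀ i, Measurable (f i)) (s : Finset ι) (x : ι → ℝ) :
    (∫⋯∫⁻_s, (fun y => ∏ i, f i (y i)) ∂(fun _ => (volume : Measure ℝ))) x
      = (∏ i ∈ s, ∫⁻ y, f i y) * ∏ i ∈ sᶜ, f i (x i) := by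
  have hF : Measurable fun y : ι → ℝ => ∏ i, f i (y i) :=
    Finset.measurable_prod _ fun i _ => (hf i).comp (measurable_pi_apply i)
  induction s using Finset.induction_on generalizing x with
  | empty => simp
  | @insert a s ha ih =>
    rw [lmarginal_insert _ hF ha]
    have key : ∀ y : ℝ,
        (∫⋯∫⁻_s, (fun y => ∏ i, f i (y i)) ∂(fun _ => (volume : Measure ℝ)))
          (Function.update x a y)
        = ((∏ i ∈ s, ∫⁻ y, f i y) * ∏ i ∈ sᶜ.erase a, f i (x i)) * f a y := by
      intro y
      rw [ih]
      have : ∏ i ∈ sᶜ, f i (Function.update x a y i)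
          = f a y * ∏ i ∈ sᶜ.erase a, f i (x i) := by
        rw [← Finset.mul_prod_erase sᶜ _ (Finset.mem_compl.2 ha)]
        simp only [Function.update_self]
        congr 1
        refine Finset.prod_congr rfl fun i hi => ?_
        rw [Function.update_of_ne (Finset.ne_of_mem_erase hi)]
      rw [this]; ring
    simp_rw [key]
    rw [lintegral_const_mul _ (hf a), Finset.prod_insert ha, Finset.compl_insert]
    ring

lemma KuraAux.lintegral_prod_pi (f : ι → ℝ → ℝ≥0∞)
    (hf : ∀ i, Measurable (f i)) :
    ∫⁻ x : ι → ℝ, ∏ i, f i (x i) = ∏ i, ∫⁻ y, f i y := by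
  rw [MeasureTheory.volume_pi, lintegral_eq_lmarginal_univ (fun _ => (0:ℝ)),
    KuraAux.lmarg_prod f hf univ]
  simp

lemma KuraAux.pi_withDensity (f : ι → ℝ → ℝ≥0∞)
    (hf : ∀ i, Measurable (f i))
    (hsf : ∀ i, SigmaFinite ((volume : Measure ℝ).withDensity (f i))) :
    Measure.pi (fun i => (volume : Measure ℝ).withDensity (f i))
      = (volume : Measure (ι → ℝ)).withDensity (fun x => ∏ i, f i (x i)) := by
  haveI := hsf
  refine Measure.pi_eq fun s hs => ?_
  rw [withDensity_apply _ (MeasurableSet.univ_pi hs)]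
  have : ∫⁻ x in Set.pi Set.univ s, (∏ i, f i (x i)) ∂(volume : Measure (ι → ℝ))
      = ∫⁻ x : ι → ℝ, ∏ i, ((s i).indicator (f i)) (x i) := by
    rw [← lintegral_indicator (MeasurableSet.univ_pi hs) _]
    congr 1
    ext x
    by_cases hx : x ∈ Set.pi Set.univ s
    · rw [Set.indicator_of_mem hx]
      exact Finset.prod_congr rfl fun i _ =>
        (Set.indicator_of_mem (hx i (Set.mem_univ i)) _).symm
    · rw [Set.indicator_of_notMem hx]
      rw [Set.mem_univ_pi] at hx
      push_neg at hx
      obtain ⟨i, hi⟩ := hx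
      exact (Finset.prod_eq_zero (Finset.mem_univ i)
        (by rw [Set.indicator_of_notMem hi])).symm
  rw [this, KuraAux.lintegral_prod_pi _ (fun i => (hf i).indicator (hs i))]
  exact Finset.prod_congr rfl fun i _ => by
    rw [withDensity_apply _ (hs i), lintegral_indicator (hs i) _]

end ProdLintegral

section Determinant

variable {N : ℕ} [NeZero N]

noncomputable def KuraAux.Mmat (N : ℕ) [NeZero N] : Matrix (Fin N) (Fin N) ℝ :=
  Matrix.of fun i j =>
    if i = 0 then (if j = 0 then 1 else -1)
    else if i = j then 1 else if j = 0 then 1 else 0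

noncomputable def KuraAux.Emat (N : ℕ) [NeZero N] : Matrix (Fin N) (Fin N) ℝ :=
  Matrix.of fun i j => if i = 0 then 1 else if i = j then 1 else 0

namespace KuraAux

lemma Emat_det : (Emat N).det = 1 := by
  rw [Matrix.det_of_upperTriangular]
  · simp [Emat]
  · intro i j hij
    have hij' : j < i := hij
    have hi : i ≠ 0 := by
      rintro rfl; exact absurd hij' (by exact Fin.not_lt.2 (Fin.zero_le j))
    simp only [Emat, Matrix.of_apply, if_neg hi, if_neg (ne_of_gt hij' : i ≠ j).symm.symm]

lemma EM_apply (i j : Fin N) :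
    (Emat N * Mmat N) i j = if i = 0 then (if j = 0 then (N : ℝ) else 0) else Mmat N i j := by
  have h1 : 1 ≤ N := Nat.one_le_iff_ne_zero.2 (NeZero.ne N)
  rw [Matrix.mul_apply]
  by_cases hi : i = 0
  · subst hi
    have hE : ∀ k, Emat N (0 : Fin N) k = (1:ℝ) := fun k => by simp [Emat]
    simp only [hE, one_mul, if_pos rfl]
    rw [← Finset.add_sum_erase _ _ (Finset.mem_univ (0 : Fin N))]
    by_cases hj : j = 0
    · subst hj
      rw [Finset.sum_congr rfl (fun k hk => by
        simp [Mmat, (Finset.mem_erase.1 hk).1] : ∀ k ∈ Finset.univ.erase (0 : Fin N),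
          Mmat N k 0 = (1:ℝ))]
      simp only [Mmat, Matrix.of_apply, if_pos rfl, Finset.sum_const, nsmul_eq_mul, mul_one,
        if_pos rfl]
      rw [Finset.card_erase_of_mem (Finset.mem_univ _), Finset.card_univ, Fintype.card_fin]
      push_cast [Nat.cast_sub h1]
      ring
    · have h0 : Mmat N 0 j = (-1:ℝ) := by simp [Mmat, hj]
      have hsum : ∑ k ∈ Finset.univ.erase (0 : Fin N), Mmat N k j = (1:ℝ) := by
        rw [Finset.sum_eq_single j]
        · simp [Mmat, hj]
        · intro k hk hkj
          simp [Mmat, (Finset.mem_erase.1 hk).1, hkj, hj]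
        · intro h; exact absurd (Finset.mem_erase.2 ⟨hj, Finset.mem_univ j⟩) h
      rw [h0, hsum, if_neg hj]
      norm_num
  · rw [if_neg hi, Finset.sum_eq_single i]
    · simp [Emat, hi]
    · intro k hk hki
      simp [Emat, hi, hki.symm]
    · simp

lemma Mmat_det : (Mmat N).det = N := by
  have hEM : (Emat N * Mmat N).det = (N : ℝ) := by
    rw [Matrix.det_of_lowerTriangular]
    · rw [Finset.prod_eq_single (0 : Fin N)]
      · simp [EM_apply]
      · intro k _ hk
        rw [EM_apply, if_neg hk]
        simp [Mmat, hk]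
      · simp
    · intro i j hij
      have hij' : i < j := hij
      have hj : j ≠ 0 := by
        rintro rfl; exact absurd hij' (by exact Fin.not_lt.2 (Fin.zero_le i))
      rw [EM_apply]
      by_cases hi : i = 0
      · rw [if_pos hi, if_neg hj]
      · rw [if_neg hi]
        simp [Mmat, hi, hj, (ne_of_lt hij' : i ≠ j)]
  rw [Matrix.det_mul, Emat_det, one_mul] at hEM
  exact hEM

/-- The linear change of variables. -/
noncomputable def Smap (N : ℕ) [NeZero N] : (Fin N → ℝ) →ₗ[ℝ] (Fin N → ℝ) :=
  Matrix.toLin' (Mmat N)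

lemma Smap_det : LinearMap.det (Smap N) = (N : ℝ) := by
  rw [Smap, LinearMap.det_toLin', Mmat_det]

lemma Smap_apply (v : Fin N → ℝ) (i : Fin N) :
    Smap N v i = ∑ j, Mmat N i j * v j := by
  rw [Smap, Matrix.toLin'_apply]
  simp [Matrix.mulVec, dotProduct]

lemma Smap_apply_ne (v : Fin N → ℝ) {i : Fin N} (hi : i ≠ 0) :
    Smap N v i = v i + v 0 := by
  rw [Smap_apply, ← Finset.add_sum_erase _ _ (Finset.mem_univ (0 : Fin N))]
  have h0 : Mmat N i 0 * v 0 = v 0 := by simp [Mmat, hi]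
  have hrest : ∑ j ∈ Finset.univ.erase (0 : Fin N), Mmat N i j * v j = v i := by
    rw [Finset.sum_eq_single i]
    · simp [Mmat, hi]
    · intro k hk hki
      simp [Mmat, hi, (Finset.mem_erase.1 hk).1, Ne.symm hki]
    · intro h; exact absurd (Finset.mem_erase.2 ⟨hi, Finset.mem_univ i⟩) h
  rw [h0, hrest]
  ring

lemma Smap_apply_zero (v : Fin N → ℝ) :
    Smap N v 0 = v 0 - ∑ j ∈ Finset.univ.erase (0 : Fin N), v j := by
  rw [Smap_apply, ← Finset.add_sum_erase _ _ (Finset.mem_univ (0 : Fin N))]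
  have h0 : Mmat N 0 0 * v 0 = v 0 := by simp [Mmat]
  have hrest : ∀ j ∈ Finset.univ.erase (0 : Fin N), Mmat N 0 j * v j = -v j := by
    intro j hj
    simp [Mmat, (Finset.mem_erase.1 hj).1]
  rw [h0, Finset.sum_congr rfl hrest, Finset.sum_neg_distrib]
  ring

lemma Smap_sum (hN : 1 ≤ N) (v : Fin N → ℝ) :
    ∑ i, Smap N v i = N * v 0 := by
  rw [← Finset.add_sum_erase _ _ (Finset.mem_univ (0 : Fin N)), Smap_apply_zero]
  rw [Finset.sum_congr rfl (fun i hi => Smap_apply_ne v (Finset.mem_erase.1 hi).1)]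
  rw [Finset.sum_add_distrib, Finset.sum_const,
    Finset.card_erase_of_mem (Finset.mem_univ _), Finset.card_univ, Fintype.card_fin,
    nsmul_eq_mul, Nat.cast_sub hN]
  push_cast
  ring

lemma Smap_sq_sum (hN : 1 ≤ N) (v : Fin N → ℝ) :
    ∑ i, (Smap N v i) ^ 2
      = (N : ℝ) * (v 0) ^ 2 + (∑ j ∈ Finset.univ.erase (0 : Fin N), v j) ^ 2
        + ∑ i ∈ Finset.univ.erase (0 : Fin N), (v i) ^ 2 := by
  rw [← Finset.add_sum_erase _ _ (Finset.mem_univ (0 : Fin N)), Smap_apply_zero]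
  have h2 : ∑ i ∈ Finset.univ.erase (0 : Fin N), (Smap N v i) ^ 2
      = ∑ i ∈ Finset.univ.erase (0 : Fin N),
          ((v i) ^ 2 + 2 * v 0 * v i + (v 0) ^ 2) :=
    Finset.sum_congr rfl fun i hi => by
      rw [Smap_apply_ne v (Finset.mem_erase.1 hi).1]; ring
  rw [h2]
  rw [Finset.sum_add_distrib, Finset.sum_add_distrib, Finset.sum_const,
    Finset.card_erase_of_mem (Finset.mem_univ _), Finset.card_univ, Fintype.card_fin,
    nsmul_eq_mul, Nat.cast_sub hN, ← Finset.mul_sum]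
  push_cast
  ring

end KuraAux

end Determinant

section OneDim

lemma KuraAux.expInt : ∀ a b : ℝ, IntervalIntegrable (fun t => Real.exp (-t ^ 2)) volume a b := by
  intro a b
  have h := integrable_exp_neg_mul_sq (by norm_num : (0:ℝ) < 1)
  have : (fun t : ℝ => Real.exp (-t ^ 2)) = fun t : ℝ => Real.exp (-1 * t ^ 2) := by
    funext t; rw [neg_one_mul]
  rw [this]
  exact h.intervalIntegrable

lemma KuraAux.erf_nonneg {x : ℝ} (hx : 0 ≤ x) : 0 ≤ erf x := by
  unfold erf
  have h1 : 0 ≤ ∫ t in (0:ℝ)..x, Real.exp (-t ^ 2) :=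
    intervalIntegral.integral_nonneg hx (fun t _ => (Real.exp_pos _).le)
  positivity

lemma KuraAux.gpdf_eq (x : ℝ) :
    gaussianPDFReal 0 1 x = (Real.sqrt (2 * Real.pi))⁻¹ * Real.exp (-x ^ 2 / 2) := by
  simp [gaussianPDFReal]

lemma KuraAux.gauss_Icc (c : ℝ) (hc : 0 ≤ c) :
    ∫ x in Set.Icc (-c) c, (Real.sqrt (2 * Real.pi))⁻¹ * Real.exp (-x ^ 2 / 2)
      = erf (c / Real.sqrt 2) := by
  rw [MeasureTheory.integral_Icc_eq_integral_Ioc,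
    ← intervalIntegral.integral_of_le (by linarith : -c ≤ c)]
  have h2 : (0:ℝ) < Real.sqrt 2 := Real.sqrt_pos.2 (by norm_num)
  have key : ∀ x : ℝ, Real.exp (-x ^ 2 / 2) = Real.exp (-(x / Real.sqrt 2) ^ 2) := by
    intro x
    congr 1
    rw [div_pow, Real.sq_sqrt (by norm_num : (0:ℝ) ≤ 2)]
    ring
  rw [intervalIntegral.integral_const_mul]
  simp_rw [key]
  rw [intervalIntegral.integral_comp_div (fun t => Real.exp (-t ^ 2)) (ne_of_gt h2)]
  have hneg : ∫ t in (-c / Real.sqrt 2)..(0:ℝ), Real.exp (-t ^ 2)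
      = ∫ t in (0:ℝ)..(c / Real.sqrt 2), Real.exp (-t ^ 2) := by
    have h := intervalIntegral.integral_comp_neg (a := (0:ℝ)) (b := c / Real.sqrt 2)
      (fun t => Real.exp (-t ^ 2))
    simp only [neg_sq, neg_zero] at h
    rw [(by ring : -c / Real.sqrt 2 = -(c / Real.sqrt 2)), ← h]
  have hsplit : ∫ t in (-c / Real.sqrt 2)..(c / Real.sqrt 2), Real.exp (-t ^ 2)
      = 2 * ∫ t in (0:ℝ)..(c / Real.sqrt 2), Real.exp (-t ^ 2) := by
    rw [← intervalIntegral.integral_add_adjacent_intervals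
      (a := -c / Real.sqrt 2) (b := 0) (c := c / Real.sqrt 2) (expInt _ _) (expInt _ _), hneg]
    ring
  rw [hsplit, erf]
  have hpi : Real.sqrt (2 * Real.pi) = Real.sqrt 2 * Real.sqrt Real.pi :=
    Real.sqrt_mul (by norm_num) _
  have hπ : (0:ℝ) < Real.sqrt Real.pi := Real.sqrt_pos.2 Real.pi_pos
  rw [hpi, smul_eq_mul]
  field_simp

lemma KuraAux.gaussLint (c : ℝ) (hc : 0 ≤ c) :
    ∫⁻ x in Set.Icc (-c) c, gaussianPDF 0 1 x = ENNReal.ofReal (erf (c / Real.sqrt 2)) := by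
  rw [← gauss_Icc c hc]
  rw [ofReal_integral_eq_lintegral_ofReal]
  · unfold gaussianPDF
    congr 1
    funext x
    rw [gpdf_eq]
  · refine Integrable.restrict ?_
    have h := integrable_gaussianPDFReal 0 1
    have heq : (fun x => (Real.sqrt (2 * Real.pi))⁻¹ * Real.exp (-x ^ 2 / 2))
        = gaussianPDFReal 0 1 := by funext x; rw [gpdf_eq]
    rw [heq]; exact h
  · exact ae_of_all _ fun x => by positivity

lemma KuraAux.h0_lint (N : ℕ) (hN : 1 ≤ N) :
    ∫⁻ s : ℝ, ENNReal.ofReal ((Real.sqrt (2 * Real.pi))⁻¹ * Real.exp (-((N:ℝ) * s ^ 2) / 2))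
      = ENNReal.ofReal (1 / Real.sqrt N) := by
  have hb : (0:ℝ) < N / 2 := by
    have : (0:ℝ) < N := by exact_mod_cast hN
    positivity
  have heq : ∀ s : ℝ, -((N:ℝ) * s ^ 2) / 2 = -((N:ℝ) / 2) * s ^ 2 := fun s => by ring
  simp_rw [heq]
  rw [← ofReal_integral_eq_lintegral_ofReal]
  · rw [MeasureTheory.integral_const_mul, integral_gaussian]
    congr 1
    have hNpos : (0:ℝ) < N := by exact_mod_cast hN
    have hdiv : Real.pi / ((N:ℝ) / 2) = 2 * Real.pi / N := by field_simp
    rw [hdiv, Real.sqrt_div (by positivity) _]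
    have h2π : (0:ℝ) < Real.sqrt (2 * Real.pi) := Real.sqrt_pos.2 (by positivity)
    have hsN : (0:ℝ) < Real.sqrt N := Real.sqrt_pos.2 hNpos
    field_simp
  · exact ((integrable_exp_neg_mul_sq hb).const_mul _)
  · exact ae_of_all _ fun x => by positivity

end OneDim

set_option maxHeartbeats 1000000 in
theorem stmt16 (N : ℕ) (hN : 2 ≤ N) (γ : ℝ) (hγ : 0 < γ) :
    Psync γ N ≤ Real.sqrt N * erf (γ * N / Real.sqrt 2) ^ (N - 1) := by
  classical
  haveI : NeZero N := ⟨by omega⟩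
  have h1N : 1 ≤ N := by omega
  have hNR : (0:ℝ) < N := by exact_mod_cast (by omega : 0 < N)
  set c : ℝ := γ * N with hc_def
  have hc : 0 ≤ c := by positivity
  set μ : Measure (Fin N → ℝ) := Measure.pi fun _ : Fin N => gaussianReal 0 1 with hμ
  -- the box event
  set B : Set (Fin N → ℝ) := {ω | ∀ i, |ω i - (∑ j, ω j) / N| ≤ c} with hB_def
  -- Step 1 : syncSet ⊆ B
  have hsub : syncSet N γ ⊆ B := by
    rintro ω ⟨θ, hθ, -⟩ 
    intro i
    have h := hθ i
    have heq : ω i - (∑ j, ω j) / N = -(γ * kuraF N θ i) := by linarith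
    rw [heq, abs_neg, abs_mul, abs_of_pos hγ]
    have hkura : |kuraF N θ i| ≤ (N : ℝ) := by
      calc |kuraF N θ i| ≤ ∑ j, |Real.sin (θ j - θ i)| := Finset.abs_sum_le_sum_abs _ _
        _ ≤ ∑ _j : Fin N, (1:ℝ) := Finset.sum_le_sum fun j _ => Real.abs_sin_le_one _
        _ = N := by simp
    calc γ * |kuraF N θ i| ≤ γ * N := by
          exact mul_le_mul_of_nonneg_left hkura hγ.le
      _ = c := rfl
  -- measurability of B
  have hBmeas : MeasurableSet B := by
    have : B = ⋂ i, {ω : Fin N → ℝ | |ω i - (∑ j, ω j) / N| ≤ c} := by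
      ext ω; simp [hB_def]
    rw [this]
    refine MeasurableSet.iInter fun i => ?_
    have hm : Measurable fun ω : Fin N → ℝ => |ω i - (∑ j, ω j) / N| :=
      (((measurable_pi_apply i).sub
        ((Finset.measurable_sum Finset.univ fun j _ => measurable_pi_apply j).div_const _))).abs
    exact measurableSet_le hm measurable_const
  -- Step 2 : μ as a density measure
  have hSFg : ∀ _i : Fin N, SigmaFinite ((volume : Measure ℝ).withDensity (gaussianPDF 0 1)) := by
    intro i
    rw [← gaussianReal_of_var_ne_zero 0 one_ne_zero]
    infer_instance
  have hμd : μ = (volume : Measure (Fin N → ℝ)).withDensity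
      (fun ω => ∏ i, gaussianPDF 0 1 (ω i)) := by
    rw [hμ]
    have : (fun _ : Fin N => gaussianReal 0 1)
        = fun _ : Fin N => (volume : Measure ℝ).withDensity (gaussianPDF 0 1) := by
      funext i; exact gaussianReal_of_var_ne_zero 0 one_ne_zero
    rw [this]
    exact KuraAux.pi_withDensity _ (fun i => measurable_gaussianPDF 0 1) hSFg
  set G : (Fin N → ℝ) → ℝ≥0∞ := fun ω => ∏ i, gaussianPDF 0 1 (ω i) with hG_def
  have hGmeas : Measurable G :=
    Finset.measurable_prod _ fun i _ => (measurable_gaussianPDF 0 1).comp (measurable_pi_apply i)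
  -- Step 3 : μ B as an lintegral
  have hμB : μ B = ∫⁻ ω, B.indicator G ω ∂(volume : Measure (Fin N → ℝ)) := by
    rw [hμd, withDensity_apply _ hBmeas, lintegral_indicator hBmeas]
  -- Step 4 : change of variables
  have hdet : LinearMap.det (KuraAux.Smap N) = (N : ℝ) := KuraAux.Smap_det
  have hdet0 : LinearMap.det (KuraAux.Smap N) ≠ 0 := by rw [hdet]; exact ne_of_gt hNR
  have hSmeas : Measurable (KuraAux.Smap N) :=
    (LinearMap.continuous_on_pi _).measurable
  have hFmeas : Measurable (B.indicator G) := hGmeas.indicator hBmeas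
  have hCV : ∫⁻ ω, B.indicator G ω ∂(volume : Measure (Fin N → ℝ))
      = ENNReal.ofReal (N : ℝ)
        * ∫⁻ v, B.indicator G (KuraAux.Smap N v) ∂(volume : Measure (Fin N → ℝ)) := by
    have hmap := Real.map_linearMap_volume_pi_eq_smul_volume_pi hdet0
    have h1 : ∫⁻ v, B.indicator G (KuraAux.Smap N v) ∂(volume : Measure (Fin N → ℝ))
        = ∫⁻ ω, B.indicator G ω ∂(Measure.map (KuraAux.Smap N) volume) :=
      (lintegral_map hFmeas hSmeas).symm
    rw [h1, hmap, hdet]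
    rw [lintegral_smul_measure]
    rw [smul_eq_mul]
    rw [← mul_assoc, ← ENNReal.ofReal_mul hNR.le]
    rw [abs_of_pos (inv_pos.2 hNR), mul_inv_cancel₀ (ne_of_gt hNR)]
    simp
  -- the product density bound
  set h : Fin N → ℝ → ℝ≥0∞ := fun i =>
    if i = 0 then (fun s : ℝ =>
        ENNReal.ofReal ((Real.sqrt (2 * Real.pi))⁻¹ * Real.exp (-((N:ℝ) * s ^ 2) / 2)))
      else gaussianPDF 0 1 with hh_def
  have hhmeas : ∀ i, Measurable (h i) := by
    intro i
    rw [hh_def]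
    by_cases hi : i = 0
    · simp only [if_pos hi]
      have hm : Measurable fun s : ℝ => -((N:ℝ) * s ^ 2) / 2 :=
        ((measurable_id.pow_const 2).const_mul _).neg.div_const 2
      exact ((Real.measurable_exp.comp hm).const_mul _).ennreal_ofReal
    · simp only [if_neg hi]
      exact measurable_gaussianPDF 0 1
  set box : Set (Fin N → ℝ) := Set.pi Set.univ
      (fun i => if i = 0 then Set.univ else Set.Icc (-c) c) with hbox_def
  have hboxmeas : MeasurableSet box :=
    MeasurableSet.univ_pi fun i => by
      by_cases hi : i = 0 <;> simp [hi, measurableSet_Icc]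
  -- Step 5 : pointwise bound
  have hpoint : ∀ v, B.indicator G (KuraAux.Smap N v)
      ≤ box.indicator (fun v => ∏ i, h i (v i)) v := by
    intro v
    by_cases hvB : KuraAux.Smap N v ∈ B
    · -- v ∈ box
      have hsum : (∑ j, KuraAux.Smap N v j) / (N:ℝ) = v 0 := by
        rw [KuraAux.Smap_sum h1N v, mul_div_assoc, mul_comm]
        field_simp
      have hvbox : v ∈ box := by
        rw [hbox_def, Set.mem_univ_pi]
        intro i
        by_cases hi : i = 0
        · simp [hi]
        · simp only [if_neg hi, Set.mem_Icc, ← abs_le]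
          have := hvB i
          rwa [KuraAux.Smap_apply_ne v hi, hsum, add_sub_cancel_right] at this
      rw [Set.indicator_of_mem hvB, Set.indicator_of_mem hvbox]
      -- real inequality
      have hGle : G (KuraAux.Smap N v) ≤ ∏ i, h i (v i) := by
        have hGr : G (KuraAux.Smap N v)
            = ENNReal.ofReal (∏ i, gaussianPDFReal 0 1 (KuraAux.Smap N v i)) := by
          rw [hG_def, ENNReal.ofReal_prod_of_nonneg fun i _ => gaussianPDFReal_nonneg 0 1 _]
          rfl
        have hh0 : h 0 (v 0) = ENNReal.ofReal ((Real.sqrt (2 * Real.pi))⁻¹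
            * Real.exp (-((N:ℝ) * (v 0) ^ 2) / 2)) := by
          simp only [hh_def, if_pos rfl]
        have hhi : ∀ i ∈ Finset.univ.erase (0 : Fin N),
            h i (v i) = ENNReal.ofReal (gaussianPDFReal 0 1 (v i)) := by
          intro i hi
          simp only [hh_def, if_neg (Finset.mem_erase.1 hi).1]
          rfl
        have hHr : ∏ i, h i (v i)
            = ENNReal.ofReal (((Real.sqrt (2 * Real.pi))⁻¹
                  * Real.exp (-((N:ℝ) * (v 0) ^ 2) / 2))
                * ∏ i ∈ Finset.univ.erase (0 : Fin N), gaussianPDFReal 0 1 (v i)) := by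
          rw [← Finset.mul_prod_erase _ _ (Finset.mem_univ (0 : Fin N)), hh0,
            Finset.prod_congr rfl hhi,
            ← ENNReal.ofReal_prod_of_nonneg fun i _ => gaussianPDFReal_nonneg 0 1 _,
            ← ENNReal.ofReal_mul (by positivity)]
        rw [hGr, hHr]
        apply ENNReal.ofReal_le_ofReal
        -- the real inequality
        have hLHS : ∏ i, gaussianPDFReal 0 1 (KuraAux.Smap N v i)
            = ((Real.sqrt (2 * Real.pi))⁻¹) ^ N
              * Real.exp (-(∑ i, (KuraAux.Smap N v i) ^ 2) / 2) := by
          simp_rw [KuraAux.gpdf_eq]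
          rw [Finset.prod_mul_distrib, Finset.prod_const, Finset.card_univ, Fintype.card_fin]
          congr 1
          rw [← Real.exp_sum]
          congr 1
          rw [← Finset.sum_div, Finset.sum_neg_distrib]
        have hRHS : ((Real.sqrt (2 * Real.pi))⁻¹ * Real.exp (-((N:ℝ) * (v 0) ^ 2) / 2))
              * ∏ i ∈ Finset.univ.erase (0 : Fin N), gaussianPDFReal 0 1 (v i)
            = ((Real.sqrt (2 * Real.pi))⁻¹) ^ N
              * Real.exp (-((N:ℝ) * (v 0) ^ 2
                  + ∑ i ∈ Finset.univ.erase (0 : Fin N), (v i) ^ 2) / 2) := by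
          simp_rw [KuraAux.gpdf_eq]
          rw [Finset.prod_mul_distrib, Finset.prod_const,
            Finset.card_erase_of_mem (Finset.mem_univ _), Finset.card_univ, Fintype.card_fin]
          rw [← Real.exp_sum]
          have hpow : (Real.sqrt (2 * Real.pi))⁻¹ * ((Real.sqrt (2 * Real.pi))⁻¹) ^ (N - 1)
              = ((Real.sqrt (2 * Real.pi))⁻¹) ^ N := by
            rw [← pow_succ']
            congr 1
            omega
          rw [mul_mul_mul_comm, hpow, ← Real.exp_add]
          congr 1
          rw [← Finset.sum_div, Finset.sum_neg_distrib]
          ring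
        rw [hLHS, hRHS]
        apply mul_le_mul_of_nonneg_left _ (by positivity)
        apply Real.exp_le_exp.2
        rw [KuraAux.Smap_sq_sum h1N v]
        have hsq : 0 ≤ (∑ j ∈ Finset.univ.erase (0 : Fin N), v j) ^ 2 := sq_nonneg _
        linarith
      exact hGle
    · rw [Set.indicator_of_notMem hvB]
      exact zero_le
  -- Step 6 : integrate the bound
  have hSF : ∀ i : Fin N, SigmaFinite ((volume : Measure ℝ).withDensity (h i)) := by
    intro i
    by_cases hi : i = 0
    · refine @IsFiniteMeasure.toSigmaFinite _ _ _ ?_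
      refine isFiniteMeasure_withDensity ?_
      rw [hh_def]
      simp only [if_pos hi]
      rw [KuraAux.h0_lint N h1N]
      exact ENNReal.ofReal_ne_top
    · have : h i = gaussianPDF 0 1 := by rw [hh_def]; simp [hi]
      rw [this]
      exact hSFg i
  have hν : Measure.pi (fun i => (volume : Measure ℝ).withDensity (h i))
      = (volume : Measure (Fin N → ℝ)).withDensity (fun v => ∏ i, h i (v i)) :=
    KuraAux.pi_withDensity _ hhmeas hSF
  have hboxval : ∫⁻ v in box, (∏ i, h i (v i)) ∂(volume : Measure (Fin N → ℝ))
      = ENNReal.ofReal (1 / Real.sqrt N)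
        * ENNReal.ofReal (erf (c / Real.sqrt 2)) ^ (N - 1) := by
    rw [← withDensity_apply _ hboxmeas, ← hν, hbox_def, Measure.pi_pi]
    rw [← Finset.mul_prod_erase _ _ (Finset.mem_univ (0 : Fin N))]
    have h0val : (volume : Measure ℝ).withDensity (h 0)
        (if (0 : Fin N) = 0 then Set.univ else Set.Icc (-c) c)
        = ENNReal.ofReal (1 / Real.sqrt N) := by
      rw [if_pos rfl, withDensity_apply _ MeasurableSet.univ, Measure.restrict_univ]
      rw [hh_def]
      simp only [if_pos rfl]
      exact KuraAux.h0_lint N h1N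
    have hival : ∀ i ∈ Finset.univ.erase (0 : Fin N),
        (volume : Measure ℝ).withDensity (h i)
          (if i = 0 then Set.univ else Set.Icc (-c) c)
        = ENNReal.ofReal (erf (c / Real.sqrt 2)) := by
      intro i hi
      have hi0 := (Finset.mem_erase.1 hi).1
      rw [if_neg hi0, withDensity_apply _ measurableSet_Icc]
      have : h i = gaussianPDF 0 1 := by rw [hh_def]; simp [hi0]
      rw [this]
      exact KuraAux.gaussLint c hc
    rw [h0val, Finset.prod_congr rfl hival, Finset.prod_const,
      Finset.card_erase_of_mem (Finset.mem_univ _), Finset.card_univ, Fintype.card_fin]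
  -- final combination
  have hmain : μ (syncSet N γ)
      ≤ ENNReal.ofReal (Real.sqrt N * erf (c / Real.sqrt 2) ^ (N - 1)) := by
    calc μ (syncSet N γ) ≤ μ B := measure_mono hsub
      _ = ∫⁻ ω, B.indicator G ω ∂(volume : Measure (Fin N → ℝ)) := hμB
      _ = ENNReal.ofReal (N : ℝ)
            * ∫⁻ v, B.indicator G (KuraAux.Smap N v) ∂(volume : Measure (Fin N → ℝ)) := hCV
      _ ≤ ENNReal.ofReal (N : ℝ)
            * ∫⁻ v, box.indicator (fun v => ∏ i, h i (v i)) v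
              ∂(volume : Measure (Fin N → ℝ)) := by
          exact mul_le_mul_right (lintegral_mono hpoint) _
      _ = ENNReal.ofReal (N : ℝ)
            * (ENNReal.ofReal (1 / Real.sqrt N)
              * ENNReal.ofReal (erf (c / Real.sqrt 2)) ^ (N - 1)) := by
          rw [lintegral_indicator hboxmeas, hboxval]
      _ = ENNReal.ofReal (Real.sqrt N * erf (c / Real.sqrt 2) ^ (N - 1)) := by
          rw [← mul_assoc, ← ENNReal.ofReal_mul hNR.le]
          rw [← ENNReal.ofReal_pow (KuraAux.erf_nonneg (by positivity))]
          rw [← ENNReal.ofReal_mul (by positivity)]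
          congr 2
          rw [mul_one_div, Real.div_sqrt]
  have hrhs : 0 ≤ Real.sqrt N * erf (c / Real.sqrt 2) ^ (N - 1) := by
    have := KuraAux.erf_nonneg (x := c / Real.sqrt 2) (by positivity)
    positivity
  rw [Psync, ← hμ]
  exact ENNReal.toReal_le_of_le_ofReal hrhs hmain
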